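/- Suppose P : ℝ → GL(d,ℝ) satisfies ω₀ P'(θ) = J(θ)P(θ) - P(θ)S with S = diag(ν₁,…,ν_d), ν₁ = 0, and suppose P(θ)⁻¹ Φ'(θ) = e₁ (the first standard basis vector) for all θ, where ω₀ Φ''(θ) = J(θ)Φ'(θ). Define R(θ) := [P(θ)P(θ)ᵀ]⁻¹ Φ'(θ). Then R satisfies the adjoint equation ω₀ R'(θ) = -J(θ)ᵀ R(θ) and the normalization ⟨R(θ), Φ'(θ)⟩ = 1 for all θ. -/

import Mathlib

open Matrix

attribute [local instance] Matrix.normedAddCommGroup Matrix.normedSpace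

private lemma diffAt_det {d : ℕ} {M : ℝ → Matrix (Fin d) (Fin d) ℝ} {θ : ℝ}
    (h : ∀ i j, DifferentiableAt ℝ (fun a => M a i j) θ) :
    DifferentiableAt ℝ (fun a => (M a).det) θ := by
  simp only [Matrix.det_apply']
  exact DifferentiableAt.fun_sum fun σ _ =>
    (DifferentiableAt.fun_finsetProd (u := Finset.univ) (fun i _ => h (σ i) i)).const_mul _

/-- With the Floquet data `ω₀ P' = J P - P S`, `S` diagonal with first diagonal
entry zero, `P⁻¹ Φ' = e₁`, and `ω₀ Φ'' = J Φ'`, the vector `R(θ) := [P(θ)P(θ)ᵀ]⁻¹ Φ'(θ)`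
satisfies the adjoint equation `ω₀ R' = -Jᵀ R` and the normalization `⟨R(θ), Φ'(θ)⟩ = 1`. -/
theorem prc_from_floquet_satisfies_adjoint
    (d : ℕ) [NeZero d] (J : ℝ → Matrix (Fin d) (Fin d) ℝ) (hJ : Continuous J)
    (P P' : ℝ → Matrix (Fin d) (Fin d) ℝ) (S : Matrix (Fin d) (Fin d) ℝ)
    (hS : S.IsDiag) (hS1 : S 0 0 = 0) (ω₀ : ℝ) (hω : 0 < ω₀)
    (hPd : ∀ θ, HasDerivAt P (P' θ) θ)
    (hPinv : ∀ θ, IsUnit (P θ).det)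
    (hPode : ∀ θ, ω₀ • P' θ = J θ * P θ - P θ * S)
    (Φd Φdd : ℝ → Fin d → ℝ)
    (hΦd : ∀ θ, HasDerivAt Φd (Φdd θ) θ)
    (hlin : ∀ θ, ω₀ • Φdd θ = (J θ).mulVec (Φd θ))
    (hnorm : ∀ θ, (P θ)⁻¹.mulVec (Φd θ) = Pi.single 0 1) :
    ∀ θ, HasDerivAt (fun a => (P a * (P a)ᵀ)⁻¹.mulVec (Φd a))
        (ω₀⁻¹ • (-((J θ)ᵀ.mulVec ((P θ * (P θ)ᵀ)⁻¹.mulVec (Φd θ))))) θ ∧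
      ((P θ * (P θ)ᵀ)⁻¹.mulVec (Φd θ)) ⬝ᵥ Φd θ = 1 := by
  intro θ
  have hω0 : ω₀ ≠ 0 := ne_of_gt hω
  set Q : ℝ → Matrix (Fin d) (Fin d) ℝ := fun a => (P a)⁻¹ with hQdef
  -- identify the function with the first row of Q
  have hfun : ∀ a, (P a * (P a)ᵀ)⁻¹.mulVec (Φd a) = fun j => Q a 0 j := by
    intro a
    rw [Matrix.mul_inv_rev, ← Matrix.mulVec_mulVec, hnorm a]
    funext j
    rw [Matrix.mulVec_single]
    simp only [← Matrix.transpose_nonsing_inv, Matrix.transpose_apply, mul_one, MulOpposite.op_one, one_smul, Matrix.col_apply]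
    rfl
  -- entrywise differentiability of P
  have hPij : ∀ i j, HasDerivAt (fun a => P a i j) (P' θ i j) θ := by
    intro i j
    exact (hasDerivAt_pi.mp ((hasDerivAt_pi.mp (hPd θ)) i)) j
  -- differentiability of Q entrywise
  have hQij : ∀ i j, DifferentiableAt ℝ (fun a => Q a i j) θ := by
    intro i j
    have hQeq : (fun a => Q a i j)
        = fun a => Ring.inverse (P a).det * (P a).adjugate i j := by
      funext a
      rw [hQdef]
      simp [Matrix.inv_def]
    rw [hQeq]
    have hdet : DifferentiableAt ℝ (fun a => (P a).det) θ :=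
      diffAt_det fun i j => (hPij i j).differentiableAt
    have hdetne : (P θ).det ≠ 0 := (hPinv θ).ne_zero -- check
    have hinv : DifferentiableAt ℝ (fun a => Ring.inverse (P a).det) θ := by
      simp only [Ring.inverse_eq_inv']
      exact hdet.inv hdetne
    have hadj : DifferentiableAt ℝ (fun a => (P a).adjugate i j) θ := by
      simp only [Matrix.adjugate_apply]
      refine diffAt_det fun k l => ?_
      by_cases hk : k = j
      · subst hk; simp [Matrix.updateRow_apply]
      · simp only [Matrix.updateRow_apply, if_neg hk]
        exact (hPij k l).differentiableAt
    exact hinv.mul hadj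
  -- differentiability of Q
  have hQdiff : DifferentiableAt ℝ Q θ := by
    refine differentiableAt_pi.mpr ?_
    intro i
    rw [differentiableAt_pi]
    intro j
    exact hQij i j
  set Q' : Matrix (Fin d) (Fin d) ℝ := deriv Q θ with hQ'def
  have hQ' : HasDerivAt Q Q' θ := hQdiff.hasDerivAt
  have hQij' : ∀ i j, HasDerivAt (fun a => Q a i j) (Q' i j) θ := fun i j =>
    (hasDerivAt_pi.mp ((hasDerivAt_pi.mp hQ') i)) j
  -- product rule : Q' * P θ + Q θ * P' θ = 0
  have key : Q' * P θ + Q θ * P' θ = 0 := by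
    ext i j
    have h1 : HasDerivAt (fun a => (Q a * P a) i j)
        ((Q' * P θ + Q θ * P' θ) i j) θ := by
      simp only [Matrix.mul_apply, Matrix.add_apply]
      rw [← Finset.sum_add_distrib]
      exact HasDerivAt.fun_sum fun k _ => ((hQij' i k).mul (hPij k j))
    have h2 : (fun a => (Q a * P a) i j) = fun _ : ℝ => (1 : Matrix (Fin d) (Fin d) ℝ) i j := by
      funext a
      rw [hQdef]
      rw [Matrix.nonsing_inv_mul _ (hPinv a)]
    rw [h2] at h1
    have := (hasDerivAt_const θ ((1 : Matrix (Fin d) (Fin d) ℝ) i j)).unique h1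
    simp [← this]
  have h1 : P θ * Q θ = 1 := Matrix.mul_nonsing_inv _ (hPinv θ)
  have h2 : Q θ * P θ = 1 := Matrix.nonsing_inv_mul _ (hPinv θ)
  have hQ'eq : Q' = -(Q θ * P' θ * Q θ) := by
    have e1 : Q' * P θ = -(Q θ * P' θ) := by
      rw [← neg_eq_of_add_eq_zero_left key]  -- check direction
    calc Q' = Q' * (P θ * Q θ) := by rw [h1, mul_one]
      _ = (Q' * P θ) * Q θ := by rw [mul_assoc]
      _ = -(Q θ * P' θ * Q θ) := by rw [e1, neg_mul]
  have hP' : P' θ = ω₀⁻¹ • (J θ * P θ - P θ * S) := by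
    rw [← hPode θ, smul_smul, inv_mul_cancel₀ hω0, one_smul]
  have hQ'eq2 : Q' = ω₀⁻¹ • (S * Q θ - Q θ * J θ) := by
    rw [hQ'eq, hP']
    have e2 : Q θ * (ω₀⁻¹ • (J θ * P θ - P θ * S)) * Q θ
        = ω₀⁻¹ • (Q θ * (J θ * P θ - P θ * S) * Q θ) := by
      rw [Matrix.mul_smul, Matrix.smul_mul]
    rw [e2]
    have e3 : Q θ * (J θ * P θ - P θ * S) * Q θ
        = Q θ * J θ * (P θ * Q θ) - (Q θ * P θ) * (S * Q θ) := by noncomm_ring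
    rw [e3, h1, h2, mul_one, one_mul, ← smul_neg, neg_sub]
  refine ⟨?_, ?_⟩
  · have hR : HasDerivAt (fun a => (P a * (P a)ᵀ)⁻¹.mulVec (Φd a)) (fun j => Q' 0 j) θ := by
      have := hasDerivAt_pi.mpr (fun j => hQij' 0 j)
      simp only [hfun]
      exact this
    convert hR using 1
    funext j
    rw [hfun θ, hQ'eq2]
    have hSrow : ∀ k, S 0 k = 0 := by
      intro k
      by_cases hk : (0 : Fin d) = k
      · rw [← hk]; exact hS1
      · exact hS hk
    simp only [Pi.smul_apply, Matrix.smul_apply, Matrix.sub_apply, Matrix.mul_apply,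
      Pi.neg_apply, Matrix.mulVec, dotProduct, Matrix.transpose_apply, smul_eq_mul,
      hSrow, zero_mul, Finset.sum_const_zero, zero_sub]
    have hs : ∑ x, J θ x j * Q θ 0 x = ∑ x, Q θ 0 x * J θ x j :=
      Finset.sum_congr rfl fun x _ => mul_comm _ _
    rw [hs]
  · rw [hfun θ]
    have := congrFun (hnorm θ) 0
    simp only [Matrix.mulVec, dotProduct, Pi.single_apply, eq_self_iff_true,
      if_true] at this
    simpa only [dotProduct] using this
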